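/- Let T be a simple graph that is a tree (connected and acyclic) and let r be a vertex of T. Let (x_n) and (y_n) be sequences of vertices, and suppose (J_k)_{k∈ℕ} and (J'_k)_{k∈ℕ} are sequences of vertices with J_0 = J'_0 = r, with J_k adjacent to J_{k+1}, J'_k adjacent to J'_{k+1}, d(r, J_k) = d(r, J'_k) = k for all k, and such that for every k there exists N with d(r, x_n) = k + d(J_k, x_n) and d(r, y_n) = k + d(J'_k, y_n) for all n ≥ N. Then the following are equivalent: (i) for every M ∈ ℕ there exists N such that for all i, j ≥ N one has d(x_i, r) + d(y_j, r) − d(x_i, y_j) ≥ M (i.e. the two admissible sequences are equivalent); (ii) J_k = J'_k for all k. -/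

import Mathlib

open SimpleGraph

/-- In a tree, every path has length equal to the distance between its endpoints. -/
lemma tree_path_length {V : Type*} {T : SimpleGraph V} (hT : T.IsTree)
    {u v : V} {q : T.Walk u v} (hq : q.IsPath) : q.length = T.dist u v := by
  obtain ⟨w, hwp, hwl⟩ := hT.isConnected.exists_path_of_dist u v
  obtain ⟨p₀, -, huniq⟩ := hT.existsUnique_path u v
  have h1 : q = p₀ := huniq q hq
  have h2 : w = p₀ := huniq w hwp
  rw [h1, ← h2, hwl]

/-- In a tree, a vertex on the (shortest) path splits the distance. -/
lemma tree_dist_split {V : Type*} {T : SimpleGraph V} (hT : T.IsTree)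
    {u v z : V} {q : T.Walk u v} (hq : q.IsPath) (hz : z ∈ q.support) :
    T.dist u z + T.dist z v = T.dist u v := by
  classical
  have hs := q.take_spec hz
  have h1 : (q.takeUntil z hz).length = T.dist u z := tree_path_length hT (hq.takeUntil hz)
  have h2 : (q.dropUntil z hz).length = T.dist z v := tree_path_length hT (hq.dropUntil hz)
  have h3 : q.length = T.dist u v := tree_path_length hT hq
  have := congrArg SimpleGraph.Walk.length hs
  rw [SimpleGraph.Walk.length_append, h1, h2, h3] at this
  exact this

/-- In a tree, the neighbor of `p` that is one step closer to `z` is unique. -/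
lemma tree_step_unique {V : Type*} {T : SimpleGraph V} (hT : T.IsTree)
    {p a b z : V} (hap : T.Adj a p) (hbp : T.Adj b p)
    (ha : T.dist z p = T.dist z a + 1) (hb : T.dist z p = T.dist z b + 1) : a = b := by
  obtain ⟨qa, hqa, hqal⟩ := hT.isConnected.exists_path_of_dist z a
  obtain ⟨qb, hqb, hqbl⟩ := hT.isConnected.exists_path_of_dist z b
  have hwa : (qa.concat hap).IsPath := by
    apply SimpleGraph.Walk.isPath_of_length_eq_dist
    rw [SimpleGraph.Walk.length_concat, hqal, ← ha]
  have hwb : (qb.concat hbp).IsPath := by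
    apply SimpleGraph.Walk.isPath_of_length_eq_dist
    rw [SimpleGraph.Walk.length_concat, hqbl, ← hb]
  obtain ⟨p₀, -, huniq⟩ := hT.existsUnique_path z p
  have heq : qa.concat hap = qb.concat hbp := by
    rw [huniq _ hwa, huniq _ hwb]
  have h2 := congrArg (fun w => w.reverse.support) heq
  simp only [SimpleGraph.Walk.reverse_concat, SimpleGraph.Walk.support_cons] at h2
  rw [qa.reverse.support_eq_cons, qb.reverse.support_eq_cons] at h2
  simp only [List.cons.injEq, true_and] at h2
  exact h2.1

/-- Key tree lemma: if the geodesics from `x` and `y` to `p` arrive through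
distinct neighbors `a` and `b` of `p`, then `p` lies on the geodesic from `x` to `y`. -/
lemma tree_dist_through {V : Type*} {T : SimpleGraph V} (hT : T.IsTree)
    {p a b x y : V} (hpa : T.Adj p a) (hpb : T.Adj p b) (hab : a ≠ b)
    (hx : T.dist p x = T.dist a x + 1) (hy : T.dist p y = T.dist b y + 1) :
    T.dist x y = T.dist x p + T.dist p y := by
  have hconn := hT.isConnected
  obtain ⟨qx, hqx, hqxl⟩ := hconn.exists_path_of_dist x a
  obtain ⟨qy, hqy, hqyl⟩ := hconn.exists_path_of_dist b y
  have hx' : T.dist x p = T.dist x a + 1 := by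
    have c1 : T.dist x p = T.dist p x := SimpleGraph.dist_comm
    have c2 : T.dist x a = T.dist a x := SimpleGraph.dist_comm
    omega
  have hwxl : (qx.concat hpa.symm).length = T.dist x p := by
    rw [SimpleGraph.Walk.length_concat, hqxl]; omega
  have hwx : (qx.concat hpa.symm).IsPath :=
    SimpleGraph.Walk.isPath_of_length_eq_dist _ hwxl
  have hwyl : (SimpleGraph.Walk.cons hpb qy).length = T.dist p y := by
    rw [SimpleGraph.Walk.length_cons, hqyl]; omega
  have hwy : (SimpleGraph.Walk.cons hpb qy).IsPath :=
    SimpleGraph.Walk.isPath_of_length_eq_dist _ hwyl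
  -- the concatenation is a path
  have hW : ((qx.concat hpa.symm).append (SimpleGraph.Walk.cons hpb qy)).IsPath := by
    rw [SimpleGraph.Walk.isPath_def, SimpleGraph.Walk.support_append]
    apply List.Nodup.append
    · exact hwx.support_nodup
    · rw [SimpleGraph.Walk.support_cons]
      exact (hwy.support_nodup).of_cons
    · -- disjointness
      intro z hz1 hz2
      rw [SimpleGraph.Walk.support_cons] at hz2
      simp only [List.tail_cons] at hz2
      rw [SimpleGraph.Walk.support_concat, List.mem_append] at hz1
      rcases hz1 with hz1 | hz1
      · -- z on the path x → a and on the path b → y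
        have e1 : T.dist x z + T.dist z a = T.dist x a := tree_dist_split hT hqx hz1
        have e2 : T.dist b z + T.dist z y = T.dist b y := tree_dist_split hT hqy hz2
        have dap : T.dist a p = 1 := SimpleGraph.dist_eq_one_iff_adj.mpr hpa.symm
        have dbp : T.dist b p = 1 := SimpleGraph.dist_eq_one_iff_adj.mpr hpb.symm
        have tza : T.dist z p ≤ T.dist z a + 1 := by
          have := hconn.dist_triangle (u := z) (v := a) (w := p)
          omega
        have tza' : T.dist z a + 1 ≤ T.dist z p := by
          have h1 : T.dist x p ≤ T.dist x z + T.dist z p := hconn.dist_triangle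
          omega
        have tzb : T.dist z p ≤ T.dist z b + 1 := by
          have := hconn.dist_triangle (u := z) (v := b) (w := p)
          omega
        have tzb' : T.dist z b + 1 ≤ T.dist z p := by
          have h1 : T.dist p y ≤ T.dist p z + T.dist z y := hconn.dist_triangle
          have c1 : T.dist p z = T.dist z p := SimpleGraph.dist_comm
          have c2 : T.dist b z = T.dist z b := SimpleGraph.dist_comm
          omega
        exact hab (tree_step_unique (z := z) hT hpa.symm hpb.symm (by omega) (by omega))
      · -- z = p, but p on the path b → y is impossible
        simp only [List.mem_singleton] at hz1
        subst hz1
        have e2 : T.dist b z + T.dist z y = T.dist b y := tree_dist_split hT hqy hz2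
        have hbz : T.dist b z = 1 := SimpleGraph.dist_eq_one_iff_adj.mpr hpb.symm
        omega
  have hfin := tree_path_length hT hW
  rw [SimpleGraph.Walk.length_append, hwxl, hwyl] at hfin
  exact hfin.symm

/-- In a tree with basepoint `r`, two admissible sequences with associated geodesic
rays `J` and `J'` are equivalent (their mutual Gromov products at `r` tend to
infinity) if and only if the geodesic rays coincide. -/
theorem admissible_sequences_equivalent_iff_same_ray
    {V : Type*} (T : SimpleGraph V) (hT : T.IsTree) (r : V)
    (x y : ℕ → V) (J J' : ℕ → V)
    (hJ0 : J 0 = r) (hJ'0 : J' 0 = r)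
    (hJadj : ∀ k, T.Adj (J k) (J (k + 1)))
    (hJ'adj : ∀ k, T.Adj (J' k) (J' (k + 1)))
    (hJdist : ∀ k, T.dist r (J k) = k)
    (hJ'dist : ∀ k, T.dist r (J' k) = k)
    (hray : ∀ k, ∃ N : ℕ, ∀ n : ℕ, N ≤ n →
      T.dist r (x n) = k + T.dist (J k) (x n) ∧
        T.dist r (y n) = k + T.dist (J' k) (y n)) :
    (∀ M : ℕ, ∃ N : ℕ, ∀ i j : ℕ, N ≤ i → N ≤ j →
        T.dist (x i) (y j) + M ≤ T.dist (x i) r + T.dist (y j) r) ↔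
      (∀ k, J k = J' k) := by
  have hconn := hT.isConnected
  constructor
  · -- equivalence → same ray
    intro h
    by_contra hne
    push_neg at hne
    have hex : ∃ k, J k ≠ J' k := hne
    classical
    have hkne : J (Nat.find hex) ≠ J' (Nat.find hex) := Nat.find_spec hex
    have hkpos : Nat.find hex ≠ 0 := by
      intro h0
      rw [h0, hJ0, hJ'0] at hkne
      exact hkne rfl
    obtain ⟨m, hm⟩ : ∃ m, Nat.find hex = m + 1 := ⟨Nat.find hex - 1, by omega⟩
    rw [hm] at hkne
    have hmeq : J m = J' m := by
      by_contra hc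
      exact Nat.find_min hex (by omega) hc
    have hpa : T.Adj (J m) (J (m + 1)) := hJadj m
    have hpb : T.Adj (J m) (J' (m + 1)) := by rw [hmeq]; exact hJ'adj m
    obtain ⟨N1, hN1⟩ := hray (m + 1)
    obtain ⟨N2, hN2⟩ := hray m
    obtain ⟨N0, hN0⟩ := h (2 * (m + 1))
    set n := max N0 (max N1 N2) with hn
    have hn0 : N0 ≤ n := le_max_left _ _
    have hn1 : N1 ≤ n := le_trans (le_max_left _ _) (le_max_right _ _)
    have hn2 : N2 ≤ n := le_trans (le_max_right _ _) (le_max_right _ _)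
    obtain ⟨hx1, hy1⟩ := hN1 n hn1
    obtain ⟨hx2, hy2⟩ := hN2 n hn2
    rw [← hmeq] at hy2
    have hxd : T.dist (J m) (x n) = T.dist (J (m + 1)) (x n) + 1 := by omega
    have hyd : T.dist (J m) (y n) = T.dist (J' (m + 1)) (y n) + 1 := by omega
    have hkey : T.dist (x n) (y n) = T.dist (x n) (J m) + T.dist (J m) (y n) :=
      tree_dist_through hT hpa hpb hkne hxd hyd
    have hmain := hN0 n n hn0 hn0
    have c1 : T.dist (x n) r = T.dist r (x n) := SimpleGraph.dist_comm
    have c2 : T.dist (y n) r = T.dist r (y n) := SimpleGraph.dist_comm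
    have c3 : T.dist (x n) (J m) = T.dist (J m) (x n) := SimpleGraph.dist_comm
    omega
  · -- same ray → equivalence
    intro h M
    obtain ⟨N, hN⟩ := hray M
    refine ⟨N, fun i j hi hj => ?_⟩
    obtain ⟨hxi, -⟩ := hN i hi
    obtain ⟨-, hyj⟩ := hN j hj
    rw [← h M] at hyj
    have htri : T.dist (x i) (y j) ≤ T.dist (x i) (J M) + T.dist (J M) (y j) :=
      hconn.dist_triangle
    have c1 : T.dist (x i) r = T.dist r (x i) := SimpleGraph.dist_comm
    have c2 : T.dist (y j) r = T.dist r (y j) := SimpleGraph.dist_comm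
    have c3 : T.dist (x i) (J M) = T.dist (J M) (x i) := SimpleGraph.dist_comm
    omega
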